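/- Let A* be a subset of a finite abelian group G* such that A* ∪ (A* + A*) = G* and the stabilizer of A* + A* is trivial. Then either A* + A* + A* = G*, or all of the following hold: 0 ∉ A*, A* = −A*, the stabilizer of A* is trivial, A* ∩ (A* + A*) = ∅, |A*| ≤ (|G*| + 1)/3, and A* + A* + A* = G* \ {0}. -/

import Mathlib

open Pointwise

section AuxKneser

open Finset

variable {G : Type*} [AddCommGroup G] [Fintype G] [DecidableEq G]


/-- mem lemma for vadd of finsets, convenient form -/
private lemma mem_vaddF {g x : G} {s : Finset G} :
    x ∈ (g +ᵥ s : Finset G) ↔ ∃ y ∈ s, g + y = x := by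
  simp [Finset.mem_vadd_finset]

private lemma vaddF_subset {g : G} {s t : Finset G} (h : ∀ y ∈ s, g + y ∈ t) :
    (g +ᵥ s : Finset G) ⊆ t := by
  intro x hx
  rcases mem_vaddF.1 hx with ⟨y, hy, rfl⟩
  exact h y hy

/-- The Dyson transform engine.  Given a "maximal exact pair" (A,B), produce
    A' ⊇ A, a point b and a finset N (the stabilizer of A') such that b +ᵥ N ⊆ B,
    A' + (b +ᵥ N) ⊆ A + B and |A| + |B| ≤ |A'| + |N|. -/
private lemma engine (m : ℕ) : ∀ (A B : Finset G), B.card ≤ m → A.Nonempty → B.Nonempty →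
    (∀ x : G, (x +ᵥ B : Finset G) ⊆ A + B → x ∈ A) →
    (∀ y : G, (y +ᵥ A : Finset G) ⊆ A + B → y ∈ B) →
    ∃ (A' N : Finset G) (b : G),
      N = Finset.univ.filter (fun g : G => (g +ᵥ A' : Finset G) = A') ∧
      A ⊆ A' ∧ ((b +ᵥ N : Finset G)) ⊆ B ∧ ((A' + (b +ᵥ N) : Finset G)) ⊆ A + B ∧
      A.card + B.card ≤ A'.card + N.card := by
  induction m with
  | zero =>
      intro A B hBm hA hB _ _
      rcases hB with ⟨b, hb⟩
      have : 0 < B.card := Finset.card_pos.2 ⟨b, hb⟩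
      omega
  | succ m ih =>
      intro A B hBm hA hB maxL maxR
      by_cases hterm : ∀ a ∈ A, ∀ b ∈ B, ∀ b' ∈ B, a + b' - b ∈ A
      · -- terminal case
        rcases hB with ⟨b₀, hb₀⟩
        set N : Finset G := Finset.univ.filter (fun g : G => (g +ᵥ A : Finset G) = A) with hN
        have memN : ∀ g : G, g ∈ N ↔ (g +ᵥ A : Finset G) = A := by
          intro g; simp [hN]
        -- B = b₀ +ᵥ N
        have hBsub : B ⊆ (b₀ +ᵥ N : Finset G) := by
          intro b' hb'
          have hmem : (b' - b₀) ∈ N := by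
            rw [memN]
            apply Finset.eq_of_subset_of_card_le
            · apply vaddF_subset
              intro a ha
              have := hterm a ha b₀ hb₀ b' hb'
              have he : b' - b₀ + a = a + b' - b₀ := by abel
              rw [he]; exact this
            · simp [Finset.card_vadd_finset]
          exact mem_vaddF.2 ⟨b' - b₀, hmem, by abel⟩
        have hNsub : (b₀ +ᵥ N : Finset G) ⊆ B := by
          intro x hx
          rcases mem_vaddF.1 hx with ⟨ν, hν, rfl⟩
          apply maxR
          apply vaddF_subset
          intro a ha
          have hstab : (ν +ᵥ A : Finset G) = A := (memN ν).1 hν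
          have hνa : ν + a ∈ A := by
            rw [← hstab]; exact mem_vaddF.2 ⟨a, ha, rfl⟩
          have : b₀ + ν + a = (ν + a) + b₀ := by abel
          rw [this]
          exact Finset.add_mem_add hνa hb₀
        have hBeq : B = (b₀ +ᵥ N : Finset G) := le_antisymm hBsub hNsub
        refine ⟨A, N, b₀, rfl, le_refl A, hNsub, ?_, ?_⟩
        · rw [← hBeq]
        · have : B.card = N.card := by rw [hBeq, Finset.card_vadd_finset]
          omega
      · -- step case
        push_neg at hterm
        rcases hterm with ⟨a₀, ha₀, b₀, hb₀, b₁, hb₁, hnot⟩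
        set e : G := a₀ - b₀ with he
        set Apre : Finset G := A ∪ (e +ᵥ B) with hApre
        set Bpre : Finset G := B ∩ ((-e) +ᵥ A) with hBpre
        have hb₀pre : b₀ ∈ Bpre := by
          rw [hBpre, Finset.mem_inter]
          exact ⟨hb₀, mem_vaddF.2 ⟨a₀, ha₀, by rw [he]; abel⟩⟩
        have hb₁pre : b₁ ∉ Bpre := by
          rw [hBpre, Finset.mem_inter]
          rintro ⟨-, hmem⟩
          rcases mem_vaddF.1 hmem with ⟨a, ha, hae⟩
          apply hnot
          have : a = a₀ + b₁ - b₀ := by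
            have : a = e + b₁ := by rw [← hae]; abel
            rw [this, he]; abel
          rwa [← this]
        -- cardinality identity
        have hcards : Apre.card + Bpre.card = A.card + B.card := by
          have h1 : Bpre = ((-e) +ᵥ (A ∩ (e +ᵥ B)) : Finset G) := by
            ext y
            constructor
            · intro hy
              rw [hBpre, Finset.mem_inter] at hy
              rcases hy with ⟨hyB, hyA⟩
              rcases mem_vaddF.1 hyA with ⟨a, ha, hay⟩
              refine mem_vaddF.2 ⟨a, ?_, hay⟩
              rw [Finset.mem_inter]
              exact ⟨ha, mem_vaddF.2 ⟨y, hyB, by rw [← hay]; abel⟩⟩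
            · intro hy
              rcases mem_vaddF.1 hy with ⟨z, hz, hzy⟩
              rw [Finset.mem_inter] at hz
              rcases hz with ⟨hzA, hzB⟩
              rcases mem_vaddF.1 hzB with ⟨y', hy', hyz⟩
              have hyy : y' = y := by rw [← hzy, ← hyz]; abel
              rw [hBpre, Finset.mem_inter]
              exact ⟨hyy ▸ hy', mem_vaddF.2 ⟨z, hzA, hzy⟩⟩
          have h2 : Bpre.card = (A ∩ (e +ᵥ B)).card := by
            rw [h1, Finset.card_vadd_finset]
          have h3 : (A ∪ (e +ᵥ B)).card + (A ∩ (e +ᵥ B)).card = A.card + (e +ᵥ B : Finset G).card :=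
            Finset.card_union_add_card_inter _ _
          rw [hApre, h2, h3, Finset.card_vadd_finset]
        -- sumset containment
        have hsumpre : (Apre + Bpre : Finset G) ⊆ A + B := by
          intro z hz
          rcases Finset.mem_add.1 hz with ⟨x, hx, y, hy, rfl⟩
          rw [hApre, Finset.mem_union] at hx
          rw [hBpre, Finset.mem_inter] at hy
          rcases hx with hx | hx
          · exact Finset.add_mem_add hx hy.1
          · rcases mem_vaddF.1 hx with ⟨b'', hb'', rfl⟩
            rcases mem_vaddF.1 hy.2 with ⟨a'', ha'', rfl⟩
            have : e + b'' + (-e + a'') = a'' + b'' := by abel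
            rw [this]
            exact Finset.add_mem_add ha'' hb''
        -- closure
        set A₂ : Finset G := Finset.univ.filter
            (fun x : G => (x +ᵥ Bpre : Finset G) ⊆ Apre + Bpre) with hA₂
        set B₂ : Finset G := Finset.univ.filter
            (fun y : G => (y +ᵥ A₂ : Finset G) ⊆ Apre + Bpre) with hB₂
        have memA₂ : ∀ x : G, x ∈ A₂ ↔ (x +ᵥ Bpre : Finset G) ⊆ Apre + Bpre := by
          intro x; simp [hA₂]
        have memB₂ : ∀ y : G, y ∈ B₂ ↔ (y +ᵥ A₂ : Finset G) ⊆ Apre + Bpre := by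
          intro y; simp [hB₂]
        have hApreA₂ : Apre ⊆ A₂ := by
          intro x hx
          rw [memA₂]
          apply vaddF_subset
          intro y hy
          exact Finset.add_mem_add hx hy
        have hBpreB₂ : Bpre ⊆ B₂ := by
          intro y hy
          rw [memB₂]
          apply vaddF_subset
          intro x hx
          have hsub := (memA₂ x).1 hx
          have : y + x = x + y := by abel
          rw [this]
          exact hsub (mem_vaddF.2 ⟨y, hy, rfl⟩)
        have hsum₂ : (A₂ + B₂ : Finset G) ⊆ Apre + Bpre := by
          intro z hz
          rcases Finset.mem_add.1 hz with ⟨x, hx, y, hy, rfl⟩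
          have hsub := (memB₂ y).1 hy
          have : x + y = y + x := by abel
          rw [this]
          exact hsub (mem_vaddF.2 ⟨x, hx, rfl⟩)
        -- collapse : B₂ = Bpre
        have hcollapse : B₂ = Bpre := by
          apply le_antisymm
          · intro y hy
            have hsub := (memB₂ y).1 hy
            rw [hBpre, Finset.mem_inter]
            constructor
            · apply maxR
              apply vaddF_subset
              intro a ha
              have hmem : y + a ∈ (y +ᵥ A₂ : Finset G) :=
                mem_vaddF.2 ⟨a, hApreA₂ (Finset.mem_union_left _ ha), rfl⟩
              exact hsumpre (hsub hmem)
            · have hye : y + e ∈ A := by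
                apply maxL
                apply vaddF_subset
                intro b'' hb''
                have hmemA₂ : e + b'' ∈ A₂ :=
                  hApreA₂ (Finset.mem_union_right _ (mem_vaddF.2 ⟨b'', hb'', rfl⟩))
                have hmem : y + (e + b'') ∈ (y +ᵥ A₂ : Finset G) :=
                  mem_vaddF.2 ⟨e + b'', hmemA₂, rfl⟩
                have : y + e + b'' = y + (e + b'') := by abel
                rw [this]
                exact hsumpre (hsub hmem)
              exact mem_vaddF.2 ⟨y + e, hye, by abel⟩
          · exact hBpreB₂
        have hB₂lt : B₂.card < B.card := by
          rw [hcollapse]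
          apply Finset.card_lt_card
          constructor
          · rw [hBpre]; exact Finset.inter_subset_left
          · intro hsub
            exact hb₁pre (hsub hb₁)
        -- maximality of (A₂, B₂) w.r.t. their own sumset
        have maxL₂ : ∀ x : G, (x +ᵥ B₂ : Finset G) ⊆ A₂ + B₂ → x ∈ A₂ := by
          intro x hx
          rw [memA₂]
          have hxB : (x +ᵥ Bpre : Finset G) = x +ᵥ B₂ := by rw [hcollapse]
          rw [hxB]
          exact hx.trans hsum₂
        have maxR₂ : ∀ y : G, (y +ᵥ A₂ : Finset G) ⊆ A₂ + B₂ → y ∈ B₂ := by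
          intro y hy
          rw [memB₂]
          exact hy.trans hsum₂
        have hA₂ne : A₂.Nonempty := hA.mono (fun a ha => hApreA₂ (Finset.mem_union_left _ ha))
        have hB₂ne : B₂.Nonempty := ⟨b₀, hBpreB₂ hb₀pre⟩
        have hB₂m : B₂.card ≤ m := by omega
        rcases ih A₂ B₂ hB₂m hA₂ne hB₂ne maxL₂ maxR₂ with
          ⟨A', N, b, hNdef, hsubA, hsubB, hsubS, hcard'⟩
        refine ⟨A', N, b, hNdef, ?_, ?_, ?_, ?_⟩
        · exact fun a ha => hsubA (hApreA₂ (Finset.mem_union_left _ ha))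
        · refine hsubB.trans ?_
          rw [hcollapse, hBpre]
          exact Finset.inter_subset_left
        · exact hsubS.trans (hsum₂.trans hsumpre)
        · have h3 : Apre.card ≤ A₂.card := Finset.card_le_card hApreA₂
          have h4 : Bpre.card = B₂.card := by rw [hcollapse]
          omega

/-- The key cardinality bound: a symmetric set avoiding 0 with A + A = Aᶜ and trivial
    stabilizer satisfies 3|A| ≤ |G| + 1. -/
private lemma boundIneq (A : Finset G) (hne : A.Nonempty) (h0 : (0:G) ∉ A)
    (hsym : -A = A) (hAA : A + A = Aᶜ)
    (hstabA : ∀ g : G, (g +ᵥ A : Finset G) = A → g = 0) :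
    3 * A.card ≤ Fintype.card G + 1 := by
  by_contra hcon
  push_neg at hcon
  set k := A.card with hk
  set n := Fintype.card G with hn
  have hcon' : n + 2 ≤ 3 * k := by omega
  -- basic facts
  have hneg : ∀ a : G, a ∈ A → -a ∈ A := by
    intro a ha
    rw [← hsym, Finset.mem_neg]
    exact ⟨a, ha, rfl⟩
  have hsumfree : ∀ a ∈ A, ∀ a' ∈ A, a + a' ∉ A := by
    intro a ha a' ha' hmem
    have : a + a' ∈ Aᶜ := by rw [← hAA]; exact Finset.add_mem_add ha ha'
    exact (Finset.mem_compl.1 this) hmem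
  -- maximality of the pair (A, A)
  have maxL : ∀ x : G, (x +ᵥ A : Finset G) ⊆ A + A → x ∈ A := by
    intro x hx
    by_contra hxA
    have hxAA : x ∈ A + A := by
      rw [hAA]; exact Finset.mem_compl.2 hxA
    rcases Finset.mem_add.1 hxAA with ⟨a₁, ha₁, a₂, ha₂, hx12⟩
    have hna₂ : -a₂ ∈ A := hneg a₂ ha₂
    have hmem : x + (-a₂) ∈ A + A := hx (mem_vaddF.2 ⟨-a₂, hna₂, rfl⟩)
    have hxa : x + (-a₂) = a₁ := by rw [← hx12]; abel
    rw [hxa, hAA] at hmem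
    exact (Finset.mem_compl.1 hmem) ha₁
  -- run the engine
  rcases engine (m := A.card) A A (le_refl _) hne hne maxL maxL with
    ⟨A', N, b, hNdef, hAA', hbN, hsub, hcard⟩
  have memN : ∀ g : G, g ∈ N ↔ (g +ᵥ A' : Finset G) = A' := by
    intro g; simp [hNdef]
  have h0N : (0:G) ∈ N := by rw [memN]; simp
  have hNadd : ∀ ν ∈ N, ∀ ν' ∈ N, ν + ν' ∈ N := by
    intro ν hν ν' hν'
    rw [memN] at *
    rw [← vadd_vadd, hν' , hν]
  have hNneg : ∀ ν ∈ N, -ν ∈ N := by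
    intro ν hν
    rw [memN] at *
    have := congrArg (fun s => ((-ν) +ᵥ s : Finset G)) hν
    simpa [vadd_vadd] using this.symm
  set Q := N.card with hQ
  set S : Finset G := b +ᵥ A' with hS
  have hScard : S.card = A'.card := by rw [hS, Finset.card_vadd_finset]
  have hbA : b ∈ A := hbN (mem_vaddF.2 ⟨0, h0N, by abel⟩)
  -- S ⊆ Aᶜ
  have hsubA' : S ⊆ Aᶜ := by
    intro x hx
    rcases mem_vaddF.1 hx with ⟨a', ha', rfl⟩
    rw [← hAA]
    apply hsub
    have : b + a' = a' + b := by abel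
    rw [this]
    exact Finset.add_mem_add ha' (mem_vaddF.2 ⟨0, h0N, by abel⟩)
  -- A ∩ N = ∅
  have hAN : ∀ ν ∈ N, ν ∉ A := by
    intro ν hν hmem
    have h1 : b + ν ∈ A := hbN (mem_vaddF.2 ⟨ν, hν, rfl⟩)
    have h2 : -b ∈ A := hneg b hbA
    have h3 : ν ∈ A + A := by
      have : ν = (b + ν) + (-b) := by abel
      rw [this]
      exact Finset.add_mem_add h1 h2
    rw [hAA] at h3
    exact (Finset.mem_compl.1 h3) hmem
  -- S disjoint from T := A + N
  set T : Finset G := A + N with hT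
  have hAT : A ⊆ T := by
    intro a ha
    have : a = a + 0 := by abel
    rw [this]
    exact Finset.add_mem_add ha h0N
  have hST : Disjoint S T := by
    rw [Finset.disjoint_left]
    intro x hxS hxT
    rcases Finset.mem_add.1 hxT with ⟨a, ha, ν, hν, rfl⟩
    -- a = -ν + (a + ν) ∈ (-ν) +ᵥ S = S
    have hstabS : ((-ν) +ᵥ S : Finset G) = S := by
      rw [hS, vadd_comm, (memN _).1 (hNneg ν hν)]
    have haS : a ∈ S := by
      rw [← hstabS]
      exact mem_vaddF.2 ⟨a + ν, hxS, by abel⟩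
    exact (Finset.mem_compl.1 (hsubA' haS)) ha
  have hSTn : S.card + T.card ≤ n := by
    rw [← Finset.card_union_of_disjoint hST]
    exact (Finset.card_le_univ _).trans_eq Finset.card_univ
  -- the key numeric bound: T.card + 2 ≤ k + Q
  have hTbound : T.card + 2 ≤ k + Q := by
    have h2 : 2 * k ≤ A'.card + Q := by
      have : A.card + A.card = 2 * k := by omega
      omega
    omega
  -- defective coset exists
  have hdef : ∃ a₁ ∈ A, ∃ ν₀ ∈ N, a₁ + ν₀ ∉ A := by
    by_contra hcontra
    push_neg at hcontra
    have hTA : T ⊆ A := by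
      intro x hx
      rcases Finset.mem_add.1 hx with ⟨a, ha, ν, hν, rfl⟩
      exact hcontra a ha ν hν
    have hTAeq : T = A := le_antisymm hTA hAT
    have hN0 : ∀ ν ∈ N, ν = 0 := by
      intro ν hν
      apply hstabA
      apply Finset.eq_of_subset_of_card_le
      · apply vaddF_subset
        intro a ha
        have : ν + a = a + ν := by abel
        rw [this, ← hTAeq]
        exact Finset.add_mem_add ha hν
      · simp [Finset.card_vadd_finset]
    have hNeq : N = {0} := by
      apply le_antisymm
      · intro ν hν
        rw [Finset.mem_singleton]
        exact hN0 ν hν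
      · intro ν hν
        rw [Finset.mem_singleton] at hν
        rw [hν]; exact h0N
    have : Q = 1 := by rw [hQ, hNeq]; simp
    have : T.card = k := by rw [hTAeq]
    omega
  rcases hdef with ⟨astar, hastar, ν₀, hν₀, hslot⟩
  -- the slot x = astar + ν₀ ∈ A + A
  have hxAA : astar + ν₀ ∈ A + A := by
    rw [hAA]; exact Finset.mem_compl.2 hslot
  rcases Finset.mem_add.1 hxAA with ⟨a₁, ha₁, a₂, ha₂, hx12⟩
  -- defect sets
  set Da : Finset G := (astar +ᵥ N) \ A with hDa
  set D1 : Finset G := (a₁ +ᵥ N) \ A with hD1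
  set P1 : Finset G := (a₁ +ᵥ N) ∩ A with hP1
  -- cosets are distinct, hence disjoint
  have hdisj : Disjoint (astar +ᵥ N : Finset G) (a₁ +ᵥ N : Finset G) := by
    rw [Finset.disjoint_left]
    intro z hz1 hz2
    rcases mem_vaddF.1 hz1 with ⟨ν, hν, hzν⟩
    rcases mem_vaddF.1 hz2 with ⟨ν', hν', hzν'⟩
    have ha₂eq : a₂ = ν' + -ν + ν₀ := by
      have h1 : astar + ν = a₁ + ν' := by rw [hzν, hzν']
      have h3 : astar - a₁ = ν' - ν := by
        calc astar - a₁ = (astar + ν) - ν - a₁ := by abel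
          _ = (a₁ + ν') - ν - a₁ := by rw [h1]
          _ = ν' - ν := by abel
      calc a₂ = (astar + ν₀) - a₁ := by rw [← hx12]; abel
        _ = (astar - a₁) + ν₀ := by abel
        _ = (ν' - ν) + ν₀ := by rw [h3]
        _ = ν' + -ν + ν₀ := by abel
    have ha₂N : a₂ ∈ N := by
      rw [ha₂eq]
      exact hNadd _ (hNadd ν' hν' (-ν) (hNneg ν hν)) ν₀ hν₀
    exact hAN a₂ ha₂N ha₂
  -- a₂ +ᵥ P1 ⊆ Da
  have hP1Da : (a₂ +ᵥ P1 : Finset G) ⊆ Da := by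
    intro z hz
    rcases mem_vaddF.1 hz with ⟨p, hp, rfl⟩
    rw [hP1, Finset.mem_inter] at hp
    rcases hp with ⟨hpN, hpA⟩
    rcases mem_vaddF.1 hpN with ⟨ν', hν', hpν⟩
    rw [hDa, Finset.mem_sdiff]
    constructor
    · refine mem_vaddF.2 ⟨ν₀ + ν', hNadd ν₀ hν₀ ν' hν', ?_⟩
      rw [← hpν]
      calc astar + (ν₀ + ν') = (astar + ν₀) + ν' := by abel
        _ = (a₁ + a₂) + ν' := by rw [hx12]
        _ = a₂ + (a₁ + ν') := by abel
    · exact hsumfree a₂ ha₂ p hpA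
  have hP1card : P1.card ≤ Da.card := by
    calc P1.card = (a₂ +ᵥ P1 : Finset G).card := (Finset.card_vadd_finset _ _).symm
      _ ≤ Da.card := Finset.card_le_card hP1Da
  have hQsplit : D1.card + P1.card = Q := by
    rw [hD1, hP1, Finset.card_sdiff_add_card_inter, Finset.card_vadd_finset]
  -- A, Da, D1 pairwise disjoint subsets of T
  have hDaT : Da ⊆ T := by
    intro z hz
    rw [hDa, Finset.mem_sdiff] at hz
    rcases mem_vaddF.1 hz.1 with ⟨ν, hν, rfl⟩
    exact Finset.add_mem_add hastar hν
  have hD1T : D1 ⊆ T := by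
    intro z hz
    rw [hD1, Finset.mem_sdiff] at hz
    rcases mem_vaddF.1 hz.1 with ⟨ν, hν, rfl⟩
    exact Finset.add_mem_add ha₁ hν
  have hADa : Disjoint A Da := by
    rw [hDa]; exact Finset.disjoint_sdiff
  have hAD1 : Disjoint A D1 := by
    rw [hD1]; exact Finset.disjoint_sdiff
  have hDaD1 : Disjoint Da D1 := by
    have h1 : Da ⊆ (astar +ᵥ N : Finset G) := by rw [hDa]; exact Finset.sdiff_subset
    have h2 : D1 ⊆ (a₁ +ᵥ N : Finset G) := by rw [hD1]; exact Finset.sdiff_subset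
    exact hdisj.mono h1 h2
  have hunionsub : A ∪ Da ∪ D1 ⊆ T := by
    intro z hz
    rcases Finset.mem_union.1 hz with hz | hz
    · rcases Finset.mem_union.1 hz with hz | hz
      · exact hAT hz
      · exact hDaT hz
    · exact hD1T hz
  have hunioncard : (A ∪ Da ∪ D1).card = k + Da.card + D1.card := by
    rw [Finset.card_union_of_disjoint, Finset.card_union_of_disjoint hADa]
    exact Finset.disjoint_union_left.2 ⟨hAD1, hDaD1⟩
  have hfinal : k + Da.card + D1.card ≤ T.card := by
    rw [← hunioncard]
    exact Finset.card_le_card hunionsub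
  omega

private lemma vadd_set_add {G : Type*} [AddCommGroup G] (g : G) (S T : Set G) :
    (g +ᵥ (S + T) : Set G) = (g +ᵥ S) + T := by
  ext z
  simp only [Set.mem_vadd_set, Set.mem_add]
  constructor
  · rintro ⟨w, ⟨x, hx, y, hy, rfl⟩, rfl⟩
    exact ⟨g + x, ⟨x, hx, rfl⟩, y, hy, by simp only [vadd_eq_add]; abel⟩
  · rintro ⟨w, ⟨x, hx, rfl⟩, y, hy, rfl⟩
    exact ⟨x + y, ⟨x, hx, y, hy, rfl⟩, by simp only [vadd_eq_add]; abel⟩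


end AuxKneser

theorem stmt5 (G : Type*) [AddCommGroup G] [Fintype G] (A : Set G)
    (hcover : A ∪ (A + A) = Set.univ)
    (hstab : AddAction.stabilizer G (A + A) = ⊥) :
    A + A + A = Set.univ ∨
      ((0 : G) ∉ A ∧ A = -A ∧ AddAction.stabilizer G A = ⊥ ∧
        A ∩ (A + A) = ∅ ∧ (A.ncard : ℝ) ≤ (Fintype.card G + 1) / 3 ∧
        A + A + A = {(0 : G)}ᶜ) := by
  classical
  by_cases h3 : A + A + A = Set.univ
  · left; exact h3
  right
  obtain ⟨g, hg⟩ : ∃ g : G, g ∉ A + A + A := by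
    by_contra hcontra; push_neg at hcontra
    exact h3 (Set.eq_univ_of_forall hcontra)
  have hAne : A.Nonempty := by
    rcases Set.eq_empty_or_nonempty A with hA | hA
    · exfalso
      have h0 : (0:G) ∈ A ∪ (A + A) := hcover ▸ Set.mem_univ 0
      rcases h0 with h0 | h0
      · rw [hA] at h0; exact h0
      · rcases Set.mem_add.1 h0 with ⟨x, hx, y, hy, -⟩
        rw [hA] at hx; exact hx
    · exact hA
  have L1 : ∀ x : G, x ∉ A + A + A → ∀ a ∈ A, x - a ∈ A := by
    intro x hx a ha
    have hmem : x - a ∈ A ∪ (A + A) := hcover ▸ Set.mem_univ _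
    rcases hmem with h | h
    · exact h
    · exfalso
      apply hx
      have := Set.add_mem_add h ha
      have heq : (x - a) + a = x := by abel
      rwa [heq] at this
  have L6 : ∀ x : G, x ∉ A + A + A → ∀ y : G, y ∉ A + A + A → x = y := by
    intro x hx y hy
    have hsub : ∀ u v : G, u ∉ A + A + A → v ∉ A + A + A →
        ∀ a ∈ A, (u - v) + a ∈ A := by
      intro u v hu hv a ha
      have h1 : v - a ∈ A := L1 v hv a ha
      have h2 : u - (v - a) ∈ A := L1 u hu _ h1
      have heq : u - (v - a) = (u - v) + a := by abel
      rwa [heq] at h2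
    have hvadd : ((x - y) +ᵥ A : Set G) = A := by
      apply Set.Subset.antisymm
      · rintro z hz
        rcases Set.mem_vadd_set.1 hz with ⟨a, ha, rfl⟩
        simpa [vadd_eq_add] using hsub x y hx hy a ha
      · intro a ha
        refine Set.mem_vadd_set.2 ⟨(y - x) + a, hsub y x hy hx a ha, ?_⟩
        simp only [vadd_eq_add]; abel
    have hvadd2 : ((x - y) +ᵥ (A + A) : Set G) = A + A := by
      rw [vadd_set_add, hvadd]
    have hmem : (x - y) ∈ AddAction.stabilizer G (A + A) := hvadd2
    rw [hstab, AddSubgroup.mem_bot] at hmem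
    have : x = y := by
      have := hmem; rwa [sub_eq_zero] at this
    exact this
  have hgg : g + g ∉ A + A + A := by
    intro hmem
    rcases Set.mem_add.1 hmem with ⟨w, hw, c, hc, hwc⟩
    rcases Set.mem_add.1 hw with ⟨p, hp, q, hq, hpq⟩
    apply hg
    have h1 : g - p ∈ A := L1 g hg p hp
    have h2 : g - q ∈ A := L1 g hg q hq
    have h3 : g - c ∈ A := L1 g hg c hc
    have hsum : (p + q) + c = g + g := by rw [hpq, hwc]
    have heq : ((g - p) + (g - q)) + (g - c) = g := by
      have h4 : ((g - p) + (g - q)) + (g - c) = g + g + g - ((p + q) + c) := by abel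
      rw [h4, hsum]; abel
    rw [← heq]
    exact Set.add_mem_add (Set.add_mem_add h1 h2) h3
  have hg0 : g = 0 := by
    have := L6 (g + g) hgg g hg
    rwa [add_eq_right] at this
  rw [hg0] at hg
  have Scompl : A + A + A = {(0 : G)}ᶜ := by
    ext z
    simp only [Set.mem_compl_iff, Set.mem_singleton_iff]
    constructor
    · intro hz hz0
      rw [hz0] at hz
      exact hg hz
    · intro hz
      by_contra hzS
      exact hz (L6 z hzS 0 hg)
  have L3 : A ∩ (A + A) = ∅ := by
    ext a
    simp only [Set.mem_inter_iff, Set.mem_empty_iff_false, iff_false, not_and]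
    intro ha haa
    apply hg
    have hna : -a ∈ A := by
      have := L1 0 hg a ha
      rwa [zero_sub] at this
    have : a + (-a) ∈ A + A + A := Set.add_mem_add haa hna
    rwa [add_neg_cancel] at this
  have L4 : (0 : G) ∉ A := by
    intro h0
    rcases hAne with ⟨a₀, ha₀⟩
    have : a₀ ∈ A ∩ (A + A) := by
      refine ⟨ha₀, ?_⟩
      have := Set.add_mem_add h0 ha₀
      rwa [zero_add] at this
    rw [L3] at this
    exact this
  have hsymm : A = -A := by
    ext x
    rw [Set.mem_neg]
    constructor
    · intro hx
      have := L1 0 hg x hx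
      rwa [zero_sub] at this
    · intro hx
      have := L1 0 hg (-x) hx
      rwa [zero_sub, neg_neg] at this
  have hstabA : AddAction.stabilizer G A = ⊥ := by
    rw [AddSubgroup.eq_bot_iff_forall]
    intro x hx
    have hx' : (x +ᵥ A : Set G) = A := hx
    have hx2 : (x +ᵥ (A + A) : Set G) = A + A := by
      rw [vadd_set_add, hx']
    have : x ∈ AddAction.stabilizer G (A + A) := hx2
    rw [hstab, AddSubgroup.mem_bot] at this
    exact this
  have hAAc : A + A = Aᶜ := by
    ext z
    simp only [Set.mem_compl_iff]
    constructor
    · intro hz hzA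
      have : z ∈ A ∩ (A + A) := ⟨hzA, hz⟩
      rw [L3] at this; exact this
    · intro hz
      have : z ∈ A ∪ (A + A) := hcover ▸ Set.mem_univ _
      rcases this with h | h
      · exact absurd h hz
      · exact h
  -- Finset conversion and the bound
  have hFin : A.Finite := A.toFinite
  set F : Finset G := hFin.toFinset with hFdef
  have hcoe : (F : Set G) = A := hFin.coe_toFinset
  have hFne : F.Nonempty := by
    rcases hAne with ⟨a, ha⟩
    exact ⟨a, hFin.mem_toFinset.2 ha⟩
  have h0F : (0 : G) ∉ F := fun h => L4 (hFin.mem_toFinset.1 h)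
  have hsymF : -F = F := by
    apply Finset.coe_injective
    rw [Finset.coe_neg, hcoe, ← hsymm]
  have hAAF : F + F = Fᶜ := by
    apply Finset.coe_injective
    rw [Finset.coe_add, Finset.coe_compl, hcoe, hAAc]
  have hstabF : ∀ x : G, (x +ᵥ F : Finset G) = F → x = 0 := by
    intro x hx
    have hx' : (x +ᵥ A : Set G) = A := by
      rw [← hcoe, ← Finset.coe_vadd_finset, hx]
    have : x ∈ AddAction.stabilizer G A := hx'
    rw [hstabA, AddSubgroup.mem_bot] at this
    exact this
  have hbound : 3 * F.card ≤ Fintype.card G + 1 :=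
    boundIneq F hFne h0F hsymF hAAF hstabF
  have hncard : A.ncard = F.card := by
    rw [hFdef]
    exact Set.ncard_eq_toFinset_card A hFin
  have hreal : (A.ncard : ℝ) ≤ (Fintype.card G + 1) / 3 := by
    rw [le_div_iff₀ (by norm_num : (0:ℝ) < 3)]
    have hnat : A.ncard * 3 ≤ Fintype.card G + 1 := by omega
    exact_mod_cast hnat
  exact ⟨L4, hsymm, hstabA, L3, hreal, Scompl⟩
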